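/- arXiv:2510.11296 — 3 statements merged into one kernel-verified Lean document; each statement's English description precedes it below -/
import Mathlib

section
/- For every b > 0, the function h(s) = log((e^s + b)/(1 + b)) − e^s/(e^s + b) is strictly monotonically increasing on ℝ. Consequently, for any s_OOD < s_ID, the gap f(s_ID) − f(s_OOD) under the ΔEnergy score f(s) = log((e^s + b)/(1+b)) strictly exceeds the gap g(s_ID) − g(s_OOD) under the MCM score g(s) = e^s/(e^s + b). -/
theorem deltaEnergy_gap_exceeds_MCM_gap (b : ℝ) (hb : 0 < b) :
    StrictMono (fun s : ℝ =>
      Real.log ((Real.exp s + b) / (1 + b)) - Real.exp s / (Real.exp s + b)) ∧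
    ∀ s_OOD s_ID : ℝ, s_OOD < s_ID →
      Real.exp s_ID / (Real.exp s_ID + b) - Real.exp s_OOD / (Real.exp s_OOD + b) <
        Real.log ((Real.exp s_ID + b) / (1 + b)) -
          Real.log ((Real.exp s_OOD + b) / (1 + b)) := by
  have hpos : ∀ s : ℝ, 0 < Real.exp s + b := fun s => by positivity
  have hderiv : ∀ s : ℝ, HasDerivAt (fun s : ℝ =>
      Real.log ((Real.exp s + b) / (1 + b)) - Real.exp s / (Real.exp s + b))
      ((Real.exp s / (Real.exp s + b))^2) s := by
    intro s
    have h1 : HasDerivAt (fun s : ℝ => Real.exp s + b) (Real.exp s) s :=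
      (Real.hasDerivAt_exp s).add_const b
    have hlog : HasDerivAt (fun s : ℝ => Real.log (Real.exp s + b))
        (Real.exp s / (Real.exp s + b)) s := h1.log (hpos s).ne'
    have hdiv : HasDerivAt (fun s : ℝ => Real.exp s / (Real.exp s + b))
        ((Real.exp s * (Real.exp s + b) - Real.exp s * Real.exp s) /
          (Real.exp s + b)^2) s :=
      (Real.hasDerivAt_exp s).div h1 (hpos s).ne'
    have heq : (fun s : ℝ => Real.log ((Real.exp s + b) / (1 + b)) -
        Real.exp s / (Real.exp s + b)) = fun s : ℝ =>
        (Real.log (Real.exp s + b) - Real.log (1 + b)) - Real.exp s / (Real.exp s + b) := by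
      funext x
      rw [Real.log_div (hpos x).ne' (by positivity)]
    rw [heq]
    have : HasDerivAt (fun s : ℝ =>
        (Real.log (Real.exp s + b) - Real.log (1 + b)) - Real.exp s / (Real.exp s + b))
        (Real.exp s / (Real.exp s + b) - (Real.exp s * (Real.exp s + b) - Real.exp s * Real.exp s) /
          (Real.exp s + b)^2) s := ((hlog.sub_const (Real.log (1 + b))).sub hdiv)
    convert this using 1
    have h2 : (Real.exp s + b) ≠ 0 := (hpos s).ne'
    field_simp
    ring
  constructor
  · apply strictMono_of_deriv_pos
    intro s
    rw [(hderiv s).deriv]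
    have := Real.exp_pos s
    positivity
  · intro s1 s2 h
    have hm := strictMono_of_deriv_pos (f := fun s : ℝ =>
      Real.log ((Real.exp s + b) / (1 + b)) - Real.exp s / (Real.exp s + b))
      (fun s => by rw [(hderiv s).deriv]; have := Real.exp_pos s; positivity) h
    simp only at hm
    linarith
end

section
/- Let s ≥ s̃ be real numbers and B > 0 with B ≥ e^s. If e^s ≤ 2·e^{s̃}, then log(1 + (e^s − e^{s̃})/(B − e^s + e^{s̃})) ≤ e^s/B. -/
theorem deltaEnergy_le_MCM (s st B : ℝ) (hss : st ≤ s) (hB : 0 < B)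
    (hBe : Real.exp s ≤ B) (hcond : Real.exp s ≤ 2 * Real.exp st) :
    Real.log (1 + (Real.exp s - Real.exp st) / (B - Real.exp s + Real.exp st)) ≤
      Real.exp s / B := by
  set a := Real.exp s with ha
  set b := Real.exp st with hb
  have hb0 : 0 < b := Real.exp_pos st
  have ha0 : 0 < a := Real.exp_pos s
  have hab : b ≤ a := Real.exp_le_exp.mpr hss
  have hD : 0 < B - a + b := by linarith
  have ht : 0 ≤ (a - b) / (B - a + b) := div_nonneg (by linarith) hD.le
  have h1 : Real.log (1 + (a - b) / (B - a + b)) ≤ (a - b) / (B - a + b) := by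
    have := Real.log_le_sub_one_of_pos (by linarith : (0:ℝ) < 1 + (a - b) / (B - a + b))
    linarith
  have h2 : (a - b) / (B - a + b) ≤ a / B := by
    rw [div_le_div_iff₀ hD hB]
    nlinarith
  linarith
end

section
/- Let s₁ ≥ s₂ and s̃₂ ≤ s₂ be real numbers, and let B > 0 with B ≥ e^{s₁} + e^{s₂}. If e^{s₂} ≤ 2·e^{s̃₂}, then (e^{s₂} − e^{s̃₂})/(B − e^{s₂} + e^{s̃₂}) ≤ e^{s₁}/B. -/
theorem deltaEnergy_top2_key_ineq (s₁ s₂ st₂ B : ℝ) (h12 : s₂ ≤ s₁) (h2 : st₂ ≤ s₂)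
    (hB : 0 < B) (hBe : Real.exp s₁ + Real.exp s₂ ≤ B)
    (hcond : Real.exp s₂ ≤ 2 * Real.exp st₂) :
    (Real.exp s₂ - Real.exp st₂) / (B - Real.exp s₂ + Real.exp st₂) ≤
      Real.exp s₁ / B := by
  have ha := Real.exp_pos s₁
  have hc := Real.exp_pos st₂
  have h1 : Real.exp s₂ ≤ Real.exp s₁ := Real.exp_le_exp.mpr h12
  have h3 : Real.exp st₂ ≤ Real.exp s₂ := Real.exp_le_exp.mpr h2
  have hden : 0 < B - Real.exp s₂ + Real.exp st₂ := by nlinarith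
  rw [div_le_div_iff₀ hden hB]
  nlinarith [mul_pos ha hc, sq_nonneg (Real.exp s₁ - Real.exp s₂)]
end
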